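/- Let f : ℝ^d → ℝ be L-smooth and twice continuously differentiable, γ ≤ 1/(2L), and g(x) = x - γ∇f(x). For any measurable set Y ⊆ ℝ^d, the Lebesgue measure of the preimage satisfies ℒ(g^{-1}(Y)) ≤ 2^d · ℒ(Y). -/

import Mathlib

open MeasureTheory
open scoped ENNReal

open InnerProductSpace
open scoped RealInnerProductSpace

-- Aux: determinant lower bound for symmetric operators with quadratic form ≥ (1/2)‖v‖².
lemma det_ge_half_pow {d : ℕ} (T : EuclideanSpace ℝ (Fin d) →L[ℝ] EuclideanSpace ℝ (Fin d))
    (hsymm : (T : EuclideanSpace ℝ (Fin d) →ₗ[ℝ] EuclideanSpace ℝ (Fin d)).IsSymmetric)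
    (hpos : ∀ v, (1/2 : ℝ) * ‖v‖^2 ≤ ⟪T v, v⟫_ℝ) :
    ((1:ℝ)/2)^d ≤ LinearMap.det (T : EuclideanSpace ℝ (Fin d) →ₗ[ℝ] EuclideanSpace ℝ (Fin d)) := by
  have hn : Module.finrank ℝ (EuclideanSpace ℝ (Fin d)) = d := finrank_euclideanSpace_fin
  set Tl := (T : EuclideanSpace ℝ (Fin d) →ₗ[ℝ] EuclideanSpace ℝ (Fin d)) with hTl
  set b := hsymm.eigenvectorBasis hn with hb
  set μ := hsymm.eigenvalues hn with hμ
  have happ : ∀ i, Tl (b i) = μ i • b i := fun i => by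
    have := hsymm.apply_eigenvectorBasis hn i
    exact_mod_cast this
  have hμhalf : ∀ i, (1/2 : ℝ) ≤ μ i := by
    intro i
    have h1 : ‖b i‖ = 1 := b.orthonormal.1 i
    have := hpos (b i)
    rw [show T (b i) = Tl (b i) from rfl, happ i, real_inner_smul_left,
      real_inner_self_eq_norm_sq, h1] at this
    simpa [h1] using this
  have hdet : LinearMap.det Tl = ∏ i, μ i := by
    rw [← LinearMap.det_toMatrix b.toBasis Tl]
    have : LinearMap.toMatrix b.toBasis b.toBasis Tl = Matrix.diagonal μ := by
      ext i j
      rw [LinearMap.toMatrix_apply]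
      simp only [OrthonormalBasis.coe_toBasis, happ j, _root_.map_smul,
        OrthonormalBasis.coe_toBasis_repr_apply, OrthonormalBasis.repr_self]
      by_cases h : i = j <;> simp [Matrix.diagonal, h, EuclideanSpace.single_apply]
    rw [this, Matrix.det_diagonal]
  rw [hTl] at hdet
  rw [hdet]
  calc ((1:ℝ)/2)^d = ∏ _i : Fin d, (1/2 : ℝ) := by simp
    _ ≤ ∏ i, μ i := Finset.prod_le_prod (fun _ _ => by norm_num) (fun i _ => hμhalf i)

/-- For `f` twice continuously differentiable with L-Lipschitz gradient `f'`
and `γ ≤ 1/(2L)`, the GD map `g(x) = x - γ∇f(x)` satisfies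
`ℒ(g⁻¹(Y)) ≤ 2^d · ℒ(Y)` for every measurable `Y`. -/
theorem stmt1 {d : ℕ} (L γ : ℝ) (hL : 0 < L) (hγ : 0 < γ) (hγL : γ ≤ 1 / (2 * L))
    (f : EuclideanSpace ℝ (Fin d) → ℝ)
    (f' : EuclideanSpace ℝ (Fin d) → EuclideanSpace ℝ (Fin d))
    (hf : ContDiff ℝ 2 f)
    (hgrad : ∀ x, HasGradientAt f (f' x) x)
    (hlip : LipschitzWith (Real.toNNReal L) f')
    (Y : Set (EuclideanSpace ℝ (Fin d))) (hY : MeasurableSet Y) :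
    volume ((fun x => x - γ • f' x) ⁻¹' Y) ≤ (2 : ℝ≥0∞) ^ d * volume Y := by
  set g : EuclideanSpace ℝ (Fin d) → EuclideanSpace ℝ (Fin d) :=
    fun x => x - γ • f' x with hg
  have hγL2 : γ * L ≤ 1/2 := by
    have h := mul_le_mul_of_nonneg_right hγL hL.le
    rwa [show (1 / (2 * L)) * L = 1/2 by field_simp] at h
  -- f' in terms of fderiv
  have hf1 : ∀ x v, fderiv ℝ f x v = ⟪f' x, v⟫_ℝ := by
    intro x v
    rw [(hgrad x).hasFDerivAt.fderiv]
    simp [toDual_apply_apply]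
  -- f' is C¹
  have hfd : ContDiff ℝ 1 (fderiv ℝ f) := hf.fderiv_right (by norm_num)
  have hf'C1 : ContDiff ℝ 1 f' := by
    have : f' = fun x => (toDual ℝ (EuclideanSpace ℝ (Fin d))).symm (fderiv ℝ f x) := by
      funext x
      rw [(hgrad x).hasFDerivAt.fderiv]
      simp
    rw [this]
    exact (toDual ℝ (EuclideanSpace ℝ (Fin d))).symm.contDiff.comp hfd
  have hf'diff : Differentiable ℝ f' := hf'C1.differentiable (by norm_num)
  set A : EuclideanSpace ℝ (Fin d) → (EuclideanSpace ℝ (Fin d) →L[ℝ] EuclideanSpace ℝ (Fin d)) :=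
    fun x => fderiv ℝ f' x with hA
  have hAd : ∀ x, HasFDerivAt f' (A x) x := fun x => (hf'diff x).hasFDerivAt
  -- key: ⟪A x u, v⟫ = second derivative
  have key : ∀ x u v, ⟪A x u, v⟫_ℝ = fderiv ℝ (fderiv ℝ f) x u v := by
    intro x u v
    have h1 : HasFDerivAt (fun y => ⟪f' y, v⟫_ℝ)
        (((innerSL ℝ).flip v).comp (A x)) x :=
      ((innerSL ℝ (E := EuclideanSpace ℝ (Fin d))).flip v).hasFDerivAt.comp x (hAd x)
    have h2 : (fun y => ⟪f' y, v⟫_ℝ) = fun y => fderiv ℝ f y v := by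
      funext y; rw [hf1]
    have h3 : HasFDerivAt (fun y => fderiv ℝ f y v)
        ((ContinuousLinearMap.apply ℝ ℝ v).comp (fderiv ℝ (fderiv ℝ f) x)) x :=
      (ContinuousLinearMap.apply ℝ ℝ v).hasFDerivAt.comp x
        ((hfd.differentiable (by norm_num) x).hasFDerivAt)
    rw [h2] at h1
    have h4 := h1.unique h3
    have h5 := ContinuousLinearMap.ext_iff.1 h4 u
    rw [ContinuousLinearMap.comp_apply, ContinuousLinearMap.flip_apply, innerSL_apply_apply,
      ContinuousLinearMap.comp_apply, ContinuousLinearMap.apply_apply] at h5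
    exact h5
  have hAsymm : ∀ x u v, ⟪A x u, v⟫_ℝ = ⟪u, A x v⟫_ℝ := by
    intro x u v
    have hsnd : IsSymmSndFDerivAt ℝ f x := by
      exact (hf.contDiffAt).isSymmSndFDerivAt (by norm_num)
    rw [key x u v, hsnd u v, ← key x v u, real_inner_comm]
  -- norm bound
  have hAnorm : ∀ x, ‖A x‖ ≤ L := by
    intro x
    have := (hAd x).le_of_lipschitz hlip
    rwa [Real.coe_toNNReal L hL.le] at this
  -- the derivative of g
  set G : EuclideanSpace ℝ (Fin d) →
      (EuclideanSpace ℝ (Fin d) →L[ℝ] EuclideanSpace ℝ (Fin d)) :=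
    fun x => ContinuousLinearMap.id ℝ _ - γ • A x with hG
  have hGd : ∀ x, HasFDerivAt g (G x) x := by
    intro x
    exact (hasFDerivAt_id x).sub ((hAd x).const_smul γ)
  -- quadratic form bound for G
  have hGpos : ∀ x v, (1/2 : ℝ) * ‖v‖^2 ≤ ⟪G x v, v⟫_ℝ := by
    intro x v
    have h1 : ⟪G x v, v⟫_ℝ = ‖v‖^2 - γ * ⟪A x v, v⟫_ℝ := by
      have hGv : G x v = v - γ • (A x v) := by simp [hG]
      rw [hGv, inner_sub_left, real_inner_smul_left, real_inner_self_eq_norm_sq]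
    have h2 : ⟪A x v, v⟫_ℝ ≤ L * ‖v‖^2 := by
      calc ⟪A x v, v⟫_ℝ ≤ ‖A x v‖ * ‖v‖ := real_inner_le_norm _ _
        _ ≤ (‖A x‖ * ‖v‖) * ‖v‖ := by
            gcongr; exact (A x).le_opNorm v
        _ ≤ (L * ‖v‖) * ‖v‖ := by
            have := hAnorm x
            gcongr
        _ = L * ‖v‖^2 := by ring
    have h3 : γ * ⟪A x v, v⟫_ℝ ≤ (1/2) * ‖v‖^2 := by
      calc γ * ⟪A x v, v⟫_ℝ ≤ γ * (L * ‖v‖^2) := by gcongr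
        _ = (γ * L) * ‖v‖^2 := by ring
        _ ≤ (1/2) * ‖v‖^2 := by gcongr
    rw [h1]; linarith
  -- symmetry of G
  have hGsymm : ∀ x, ((G x : EuclideanSpace ℝ (Fin d) →ₗ[ℝ] EuclideanSpace ℝ (Fin d))).IsSymmetric := by
    intro x u v
    have : ⟪G x u, v⟫_ℝ = ⟪u, G x v⟫_ℝ := by
      simp only [hG, ContinuousLinearMap.sub_apply, ContinuousLinearMap.smul_apply,
        ContinuousLinearMap.id_apply, inner_sub_left, inner_sub_right,
        real_inner_smul_left, real_inner_smul_right, hAsymm x u v]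
    exact this
  -- determinant bound
  have hdet : ∀ x, ((1:ℝ)/2)^d ≤ (G x).det := by
    intro x
    exact det_ge_half_pow (G x) (hGsymm x) (hGpos x)
  have hdet' : ∀ x, ((1:ℝ)/2)^d ≤ |(G x).det| :=
    fun x => (hdet x).trans (le_abs_self _)
  -- injectivity of g
  have hginj : Function.Injective g := by
    intro x y hxy
    have h1 : x - y = γ • (f' x - f' y) := by
      have : x - γ • f' x = y - γ • f' y := hxy
      rw [smul_sub]
      abel_nf
      abel_nf at this
      linear_combination (norm := module) this
    have h2 : ‖x - y‖ ≤ (γ * L) * ‖x - y‖ := by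
      calc ‖x - y‖ = γ * ‖f' x - f' y‖ := by
            rw [h1, norm_smul, Real.norm_eq_abs, abs_of_pos hγ]
        _ ≤ γ * (L * ‖x - y‖) := by
            have := hlip.dist_le_mul x y
            rw [dist_eq_norm, dist_eq_norm, Real.coe_toNNReal L hL.le] at this
            gcongr
        _ = (γ * L) * ‖x - y‖ := by ring
    have h3 : ‖x - y‖ = 0 := by
      by_contra h
      have hpos : 0 < ‖x - y‖ := lt_of_le_of_ne (norm_nonneg _) (Ne.symm h)
      nlinarith
    rwa [norm_sub_eq_zero_iff] at h3
  -- measurability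
  have hgc : Continuous g := by
    have : Continuous f' := hf'C1.continuous
    fun_prop
  set s : Set (EuclideanSpace ℝ (Fin d)) := g ⁻¹' Y with hs
  have hsm : MeasurableSet s := hY.preimage hgc.measurable
  -- change of variables
  have hcov : (∫⁻ x in s, ENNReal.ofReal |(G x).det| ∂volume) = volume (g '' s) :=
    lintegral_abs_det_fderiv_eq_addHaar_image volume hsm
      (fun x _ => (hGd x).hasFDerivWithinAt) (hginj.injOn)
  have himg : volume (g '' s) ≤ volume Y :=
    measure_mono (Set.image_preimage_subset g Y)
  -- pointwise bound: 1 ≤ 2^d * ofReal |det|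
  have hpt : ∀ x, (1 : ℝ≥0∞) ≤ (2:ℝ≥0∞)^d * ENNReal.ofReal |(G x).det| := by
    intro x
    have h1 : ENNReal.ofReal (((1:ℝ)/2)^d) ≤ ENNReal.ofReal |(G x).det| :=
      ENNReal.ofReal_le_ofReal (hdet' x)
    have h2 : (2:ℝ≥0∞)^d * ENNReal.ofReal (((1:ℝ)/2)^d) = 1 := by
      rw [ENNReal.ofReal_pow (by norm_num)]
      rw [show ENNReal.ofReal ((1:ℝ)/2) = 2⁻¹ by
        rw [ENNReal.ofReal_div_of_pos (by norm_num)]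
        simp [ENNReal.ofReal_ofNat]]
      rw [← mul_pow, ENNReal.mul_inv_cancel (by norm_num) (by norm_num), one_pow]
    calc (1 : ℝ≥0∞) = (2:ℝ≥0∞)^d * ENNReal.ofReal (((1:ℝ)/2)^d) := h2.symm
      _ ≤ (2:ℝ≥0∞)^d * ENNReal.ofReal |(G x).det| := by gcongr
  calc volume s = ∫⁻ _x in s, 1 ∂volume := by rw [setLIntegral_one]
    _ ≤ ∫⁻ x in s, (2:ℝ≥0∞)^d * ENNReal.ofReal |(G x).det| ∂volume :=
        lintegral_mono (fun x => hpt x)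
    _ = (2:ℝ≥0∞)^d * ∫⁻ x in s, ENNReal.ofReal |(G x).det| ∂volume :=
        lintegral_const_mul' _ _ (by simp)
    _ = (2:ℝ≥0∞)^d * volume (g '' s) := by rw [hcov]
    _ ≤ (2:ℝ≥0∞)^d * volume Y := by gcongr
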